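/- There exist constants δ ∈ (0,1] and c₀ > 0 such that: for all smooth maps η, u : ℝ² → ℝ², 2-periodic in each variable, both satisfying the odevity conditions (first component even in y₂, second component odd in y₂), with det(I + ∇η) = 1, ‖∂₂η‖₂ ≤ δ, and div_𝒜 u = 0 where 𝒜 = (∇(η + id))^{-T}, one has ‖∂₁u‖_{L^∞} ≤ c₀ ‖∂₂u‖₂ and ‖∂₂u‖_{L^∞} ≤ c₀ ‖∂₂²u‖₁, where the L^∞ norms are taken over the periodic cell (-1,1)². -/

import Mathlib

open MeasureTheory

noncomputable section

/-- A point of the plane `ℝ²`. -/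
abbrev Pt := ℝ × ℝ

/-- The periodic cell `(-1,1)²`. -/
def cell : Set Pt := Set.Ioo (-1 : ℝ) 1 ×ˢ Set.Ioo (-1 : ℝ) 1

/-- `f` is 2-periodic in each variable. -/
def Periodic2 (f : Pt → ℝ) : Prop :=
  (∀ y : Pt, f (y.1 + 2, y.2) = f y) ∧ ∀ y : Pt, f (y.1, y.2 + 2) = f y

/-- Partial derivative in the first variable. -/
def p1 (f : Pt → ℝ) : Pt → ℝ := fun y => fderiv ℝ f y (1, 0)

/-- Partial derivative in the second variable. -/
def p2 (f : Pt → ℝ) : Pt → ℝ := fun y => fderiv ℝ f y (0, 1)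

/-- Iterated partial derivative `∂₁^a ∂₂^b f`. -/
def pd (a b : ℕ) (f : Pt → ℝ) : Pt → ℝ := p1^[a] (p2^[b] f)

/-- Square of the `L²((-1,1)²)` norm. -/
def L2sq (f : Pt → ℝ) : ℝ := ∫ y in cell, (f y) ^ 2

/-- The `L²((-1,1)²)` norm `‖f‖₀`. -/
def L2 (f : Pt → ℝ) : ℝ := Real.sqrt (L2sq f)

/-- Square of the Sobolev norm `‖f‖_i² = Σ_{|α| ≤ i} ‖∂^α f‖₀²`. -/
def sobSq (i : ℕ) (f : Pt → ℝ) : ℝ :=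
  ∑ a ∈ Finset.range (i + 1), ∑ b ∈ Finset.range (i + 1 - a), L2sq (pd a b f)

/-- The Sobolev norm `‖f‖_i`. -/
def sob (i : ℕ) (f : Pt → ℝ) : ℝ := Real.sqrt (sobSq i f)

/-- Square of the homogeneous seminorm `‖∇^i f‖₀² = Σ_{|α| = i} ‖∂^α f‖₀²`. -/
def gradSq (i : ℕ) (f : Pt → ℝ) : ℝ :=
  ∑ a ∈ Finset.range (i + 1), L2sq (pd a (i - a) f)

/-- First component of a map `ℝ² → ℝ²`. -/
def comp1 (v : Pt → Pt) : Pt → ℝ := fun y => (v y).1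

/-- Second component of a map `ℝ² → ℝ²`. -/
def comp2 (v : Pt → Pt) : Pt → ℝ := fun y => (v y).2

/-- The odevity conditions: the first component is even in `y₂`, the second is odd. -/
def Odev (v : Pt → Pt) : Prop :=
  ∀ y : Pt, (v (y.1, -y.2)).1 = (v y).1 ∧ (v (y.1, -y.2)).2 = -(v y).2

/-- The incompressibility condition `det(I + ∇η) = 1`. -/
def DetCond (η : Pt → Pt) : Prop :=
  ∀ y : Pt, (1 + p1 (comp1 η) y) * (1 + p2 (comp2 η) y)
      - p2 (comp1 η) y * p1 (comp2 η) y = 1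

/-- Sobolev norm `‖v‖_i` of a vector field (components summed). -/
def sobV (i : ℕ) (v : Pt → Pt) : ℝ := Real.sqrt (sobSq i (comp1 v) + sobSq i (comp2 v))

/-- The vector field `∂₂v`. -/
def d2V (v : Pt → Pt) : Pt → Pt := fun y => (p2 (comp1 v) y, p2 (comp2 v) y)

/-- The condition `div_𝒜 u = 0`, where `𝒜 = (∇(η + id))^{-T}` in cofactor form
(valid when `det(I + ∇η) = 1`):
`𝒜 = [[1 + ∂₂η₂, −∂₁η₂], [−∂₂η₁, 1 + ∂₁η₁]]`. -/
def DivACond (η u : Pt → Pt) : Prop :=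
  ∀ y : Pt,
    (1 + p2 (comp2 η) y) * p1 (comp1 u) y - p1 (comp2 η) y * p2 (comp1 u) y
      - p2 (comp1 η) y * p1 (comp2 u) y + (1 + p1 (comp1 η) y) * p2 (comp2 u) y = 0


section Helpers

variable {f : Pt → ℝ}

lemma hasDerivAt_snd (hf : ContDiff ℝ (⊤ : ℕ∞) f) (x t : ℝ) :
    HasDerivAt (fun s => f (x, s)) (p2 f (x, t)) t := by
  have h1 : HasDerivAt (fun s : ℝ => ((x, s) : Pt)) ((0, 1) : Pt) t :=
    (hasDerivAt_const t x).prodMk (hasDerivAt_id t)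
  have h2 := (hf.differentiable (by simp) (x, t)).hasFDerivAt
  simpa [p2, Function.comp_def] using h2.comp_hasDerivAt t h1

lemma hasDerivAt_fst (hf : ContDiff ℝ (⊤ : ℕ∞) f) (x t : ℝ) :
    HasDerivAt (fun s => f (s, t)) (p1 f (x, t)) x := by
  have h1 : HasDerivAt (fun s : ℝ => ((s, t) : Pt)) ((1, 0) : Pt) x :=
    (hasDerivAt_id x).prodMk (hasDerivAt_const x t)
  have h2 := (hf.differentiable (by simp) (x, t)).hasFDerivAt
  simpa [p1, Function.comp_def] using h2.comp_hasDerivAt x h1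

lemma contDiff_p2 (hf : ContDiff ℝ (⊤ : ℕ∞) f) : ContDiff ℝ (⊤ : ℕ∞) (p2 f) :=
  (hf.fderiv_right (by simp)).clm_apply contDiff_const

lemma contDiff_p1 (hf : ContDiff ℝ (⊤ : ℕ∞) f) : ContDiff ℝ (⊤ : ℕ∞) (p1 f) :=
  (hf.fderiv_right (by simp)).clm_apply contDiff_const

lemma continuous_p2 (hf : ContDiff ℝ (⊤ : ℕ∞) f) : Continuous (p2 f) :=
  (contDiff_p2 hf).continuous

lemma continuous_p1 (hf : ContDiff ℝ (⊤ : ℕ∞) f) : Continuous (p1 f) :=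
  (contDiff_p1 hf).continuous

lemma p1_p2_comm (hf : ContDiff ℝ (⊤ : ℕ∞) f) : p1 (p2 f) = p2 (p1 f) := by
  funext y
  have hd : ∀ z, HasFDerivAt f (fderiv ℝ f z) z := fun z =>
    (hf.differentiable (by simp) z).hasFDerivAt
  have hd2 : HasFDerivAt (fderiv ℝ f) (fderiv ℝ (fderiv ℝ f) y) y :=
    (((hf.fderiv_right (m := (⊤ : ℕ∞)) (by simp)).differentiable (by simp)) y).hasFDerivAt
  have hsymm := second_derivative_symmetric hd hd2 ((1:ℝ), (0:ℝ)) ((0:ℝ), (1:ℝ))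
  have e1 : ∀ v : Pt, fderiv ℝ (fun z => fderiv ℝ f z v) y
      = (fderiv ℝ (fderiv ℝ f) y).flip v := by
    intro v
    have := fderiv_clm_apply (c := fderiv ℝ f) (u := fun _ : Pt => v)
      (((hf.fderiv_right (m := (⊤ : ℕ∞)) (by simp)).differentiable (by simp)) y) (differentiableAt_const v)
    simpa using this
  have e2 : p1 (p2 f) y = fderiv ℝ (fderiv ℝ f) y (1, 0) (0, 1) := by
    have := congrFun (congrArg DFunLike.coe (e1 ((0:ℝ),(1:ℝ)))) ((1:ℝ),(0:ℝ))
    rw [ContinuousLinearMap.flip_apply] at this; exact this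
  have e3 : p2 (p1 f) y = fderiv ℝ (fderiv ℝ f) y (0, 1) (1, 0) := by
    have := congrFun (congrArg DFunLike.coe (e1 ((1:ℝ),(0:ℝ)))) ((0:ℝ),(1:ℝ))
    rw [ContinuousLinearMap.flip_apply] at this; exact this
  rw [e2, e3, hsymm]

end Helpers

section IntHelpers

open Set intervalIntegral

lemma integrableOn_cell {φ : Pt → ℝ} (hφ : Continuous φ) : IntegrableOn φ cell := by
  have h1 : IntegrableOn φ (Set.Icc (-1:ℝ) 1 ×ˢ Set.Icc (-1:ℝ) 1) :=
    hφ.continuousOn.integrableOn_compact (isCompact_Icc.prod isCompact_Icc)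
  exact h1.mono_set (Set.prod_mono Set.Ioo_subset_Icc_self Set.Ioo_subset_Icc_self)

lemma volume_cell : (volume cell) = 4 := by
  rw [cell, Measure.volume_eq_prod ℝ ℝ, Measure.prod_prod]
  rw [Real.volume_Ioo]
  rw [← ENNReal.ofReal_mul (by norm_num)]
  norm_num

lemma abs_intervalIntegral_le {φ : ℝ → ℝ} (hφ : Continuous φ) {a b : ℝ}
    (ha : a ∈ Set.Icc (-1:ℝ) 1) (hb : b ∈ Set.Icc (-1:ℝ) 1) :
    |∫ t in a..b, φ t| ≤ ∫ t in (-1:ℝ)..1, |φ t| := by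
  have h1 : |∫ t in a..b, φ t| ≤ |(∫ t in a..b, |φ t|)| := by
    have h0 := intervalIntegral.norm_integral_le_abs_integral_norm
      (f := φ) (a := a) (b := b) (μ := volume)
    simpa [Real.norm_eq_abs] using h0
  have h2 : |(∫ t in a..b, |φ t|)| ≤ |(∫ t in (-1:ℝ)..1, |φ t|)| := by
    apply intervalIntegral.abs_integral_mono_interval
    · exact Set.uIoc_subset_uIoc_of_uIcc_subset_uIcc
        (Set.uIcc_subset_uIcc
          (by rw [Set.uIcc_of_le (show (-1:ℝ) ≤ 1 by norm_num)]; exact ha)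
          (by rw [Set.uIcc_of_le (show (-1:ℝ) ≤ 1 by norm_num)]; exact hb))
    · exact Filter.Eventually.of_forall fun t => abs_nonneg _
    · exact (hφ.abs).intervalIntegrable _ _
  calc |∫ t in a..b, φ t| ≤ |(∫ t in a..b, |φ t|)| := h1
    _ ≤ |(∫ t in (-1:ℝ)..1, |φ t|)| := h2
    _ = ∫ t in (-1:ℝ)..1, |φ t| := abs_of_nonneg (intervalIntegral.integral_nonneg
        (by norm_num) (fun t _ => abs_nonneg _))

lemma ftc_snd {f : Pt → ℝ} (hf : ContDiff ℝ (⊤ : ℕ∞) f) (x a b : ℝ) :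
    ∫ t in a..b, p2 f (x, t) = f (x, b) - f (x, a) :=
  intervalIntegral.integral_eq_sub_of_hasDerivAt (fun t _ => hasDerivAt_snd hf x t)
    (((continuous_p2 hf).comp (Continuous.prodMk_right x)).intervalIntegrable _ _)

lemma ftc_fst {f : Pt → ℝ} (hf : ContDiff ℝ (⊤ : ℕ∞) f) (t a b : ℝ) :
    ∫ s in a..b, p1 f (s, t) = f (b, t) - f (a, t) :=
  intervalIntegral.integral_eq_sub_of_hasDerivAt (fun s _ => hasDerivAt_fst hf s t)
    (((continuous_p1 hf).comp (continuous_id.prodMk continuous_const)).intervalIntegrable _ _)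

lemma L2sq_nonneg (φ : Pt → ℝ) : 0 ≤ L2sq φ :=
  MeasureTheory.integral_nonneg fun _ => sq_nonneg _

/-- Cauchy–Schwarz on the cell. -/
lemma cs_cell {φ : Pt → ℝ} (hφ : Continuous φ) :
    ∫ z in cell, |φ z| ≤ 2 * Real.sqrt (L2sq φ) := by
  have hcellm : MeasurableSet cell := (measurableSet_Ioo).prod measurableSet_Ioo
  have hint1 : IntegrableOn (fun z => |φ z|) cell := integrableOn_cell hφ.abs
  have hint2 : IntegrableOn (fun z => (φ z) ^ 2) cell := integrableOn_cell (hφ.pow 2)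
  have key : ∀ ε : ℝ, 0 < ε → (∫ z in cell, |φ z|) ≤ 4 * ε + (L2sq φ) / (4 * ε) := by
    intro ε hε
    have hptwise : ∀ z ∈ cell, |φ z| ≤ ε + (φ z) ^ 2 / (4 * ε) := by
      intro z _
      have h1 : (0:ℝ) ≤ (|φ z| - 2 * ε) ^ 2 := sq_nonneg _
      have h2 : |φ z| ^ 2 = (φ z) ^ 2 := sq_abs _
      have h4 : (0:ℝ) < 4 * ε := by linarith
      rw [← sub_le_iff_le_add', le_div_iff₀ h4]
      nlinarith [sq_nonneg (|φ z| - 2 * ε), sq_abs (φ z)]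
    have hint3 : IntegrableOn (fun z => ε + (φ z) ^ 2 / (4 * ε)) cell := by
      apply Integrable.add ((integrableOn_const_iff).mpr (Or.inr ?_)) (hint2.div_const _)
      rw [volume_cell]; norm_num
    calc (∫ z in cell, |φ z|) ≤ ∫ z in cell, (ε + (φ z) ^ 2 / (4 * ε)) :=
          MeasureTheory.setIntegral_mono_on hint1 hint3 hcellm hptwise
      _ = (∫ z in cell, ε) + ∫ z in cell, (φ z) ^ 2 / (4 * ε) :=
          MeasureTheory.integral_add ((integrableOn_const_iff).mpr (Or.inr (by rw [volume_cell]; norm_num)))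
            (hint2.div_const _)
      _ = 4 * ε + (L2sq φ) / (4 * ε) := by
          rw [MeasureTheory.setIntegral_const, measureReal_def, volume_cell, L2sq,
            MeasureTheory.integral_div]
          norm_num
  have hQ : 0 ≤ L2sq φ := L2sq_nonneg φ
  rcases eq_or_lt_of_le hQ with hQ0 | hQpos
  · have h0 : (∫ z in cell, |φ z|) ≤ 0 := by
      apply le_of_forall_pos_le_add
      intro ε hε
      have h := key (ε / 8) (by linarith)
      rw [← hQ0, zero_div] at h
      linarith
    calc (∫ z in cell, |φ z|) ≤ 0 := h0
      _ ≤ 2 * Real.sqrt (L2sq φ) := by positivity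
  · have hs : 0 < Real.sqrt (L2sq φ) := Real.sqrt_pos.mpr hQpos
    have := key (Real.sqrt (L2sq φ) / 4) (by linarith)
    have hss : Real.sqrt (L2sq φ) * Real.sqrt (L2sq φ) = L2sq φ :=
      Real.mul_self_sqrt hQ
    calc (∫ z in cell, |φ z|)
        ≤ 4 * (Real.sqrt (L2sq φ) / 4) + (L2sq φ) / (4 * (Real.sqrt (L2sq φ) / 4)) := this
      _ = Real.sqrt (L2sq φ) + L2sq φ / Real.sqrt (L2sq φ) := by ring_nf
      _ = 2 * Real.sqrt (L2sq φ) := by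
          have hdiv : L2sq φ / Real.sqrt (L2sq φ) = Real.sqrt (L2sq φ) := by
            rw [div_eq_iff hs.ne']; exact hss.symm
          rw [hdiv]; ring

end IntHelpers

section Master

open Set intervalIntegral

/-- Fubini-type facts for the inner-first-variable integral of `|φ|`. -/
lemma fubini_abs {φ : Pt → ℝ} (hφ : Continuous φ) :
    IntervalIntegrable (fun t => ∫ s in (-1:ℝ)..1, |φ (s, t)|) volume (-1) 1 ∧
    (∫ t in (-1:ℝ)..1, (∫ s in (-1:ℝ)..1, |φ (s, t)|)) = ∫ z in cell, |φ z| := by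
  set ν : Measure ℝ := volume.restrict (Set.Ioo (-1:ℝ) 1) with hν
  have hresteq : (volume : Measure Pt).restrict cell = ν.prod ν := by
    rw [cell, hν, Measure.prod_restrict, ← Measure.volume_eq_prod]
  have H : Integrable (fun z : ℝ × ℝ => |φ (z.2, z.1)|) (ν.prod ν) := by
    have h1 : IntegrableOn (fun z : Pt => |φ z|) cell := integrableOn_cell hφ.abs
    have h2 : Integrable (fun z : Pt => |φ z|) (ν.prod ν) := by
      rwa [← hresteq]
    exact h2.swap
  have hiieq : ∀ ψ : ℝ → ℝ, (∫ t in (-1:ℝ)..1, ψ t) = ∫ t, ψ t ∂ν := by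
    intro ψ
    rw [intervalIntegral.integral_of_le (by norm_num : (-1:ℝ) ≤ 1),
      MeasureTheory.integral_Ioc_eq_integral_Ioo]
  have hinner : ∀ t : ℝ, (∫ s in (-1:ℝ)..1, |φ (s, t)|) = ∫ s, |φ (s, t)| ∂ν :=
    fun t => hiieq _
  constructor
  · rw [intervalIntegrable_iff_integrableOn_Ioo_of_le (by norm_num : (-1:ℝ) ≤ 1)]
    have := H.integral_prod_left
    exact IntegrableOn.congr_fun this (fun t _ => (hinner t).symm) measurableSet_Ioo
  · rw [hiieq]
    have h3 : (∫ t, (∫ s in (-1:ℝ)..1, |φ (s, t)|) ∂ν) = ∫ t, (∫ s, |φ (s, t)| ∂ν) ∂ν := by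
      apply MeasureTheory.integral_congr_ae
      exact Filter.Eventually.of_forall fun t => hinner t
    rw [h3]
    have h4 := (MeasureTheory.integral_prod _ H).symm
    rw [h4]
    have h5 := MeasureTheory.integral_prod_swap (μ := ν) (ν := ν) (fun z : ℝ × ℝ => |φ z|)
    calc (∫ z : ℝ × ℝ, |φ (z.2, z.1)| ∂ν.prod ν)
        = ∫ z : ℝ × ℝ, |φ z| ∂ν.prod ν := h5
      _ = ∫ z in cell, |φ z| := by rw [← hresteq]

/-- Master pointwise bound. -/
lemma master {f : Pt → ℝ} (hf : ContDiff ℝ (⊤ : ℕ∞) f)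
    (hz : ∀ x : ℝ, ∃ s ∈ Set.Icc (-1:ℝ) 1, f (x, s) = 0) :
    ∀ y ∈ cell, |f y| ≤ 3 * Real.sqrt (L2sq (p2 f) + L2sq (p1 (p2 f))) := by
  intro y hy
  obtain ⟨hy1, hy2⟩ := hy
  set g := p2 f with hgdef
  have hg : ContDiff ℝ (⊤ : ℕ∞) g := contDiff_p2 hf
  have cg : Continuous g := hg.continuous
  have ch : Continuous (p1 g) := continuous_p1 hg
  -- Step A
  obtain ⟨s, hs, hfs⟩ := hz y.1
  have hA : |f y| ≤ ∫ t in (-1:ℝ)..1, |g (y.1, t)| := by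
    have hftc : ∫ t in s..y.2, g (y.1, t) = f (y.1, y.2) - f (y.1, s) := ftc_snd hf y.1 s y.2
    rw [hfs, sub_zero] at hftc
    have : f y = ∫ t in s..y.2, g (y.1, t) := by rw [hftc]
    rw [this]
    exact abs_intervalIntegral_le (cg.comp (Continuous.prodMk_right y.1)) hs
      ⟨le_of_lt hy2.1, le_of_lt hy2.2⟩
  -- Step B
  have hB : ∀ t : ℝ, |g (y.1, t)| ≤
      (1/2) * (∫ s' in (-1:ℝ)..1, |g (s', t)|) + ∫ r in (-1:ℝ)..1, |p1 g (r, t)| := by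
    intro t
    set C := ∫ r in (-1:ℝ)..1, |p1 g (r, t)| with hC
    have key : ∀ s' ∈ Set.Icc (-1:ℝ) 1, |g (y.1, t)| - C ≤ |g (s', t)| := by
      intro s' hs'
      have hftc : ∫ r in s'..y.1, p1 g (r, t) = g (y.1, t) - g (s', t) := ftc_fst hg t s' y.1
      have h1 : |g (y.1, t)| - |g (s', t)| ≤ |g (y.1, t) - g (s', t)| := abs_sub_abs_le_abs_sub _ _
      have h2 : |g (y.1, t) - g (s', t)| ≤ C := by
        rw [← hftc]
        exact abs_intervalIntegral_le (ch.comp (continuous_id.prodMk continuous_const)) hs'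
          ⟨le_of_lt hy1.1, le_of_lt hy1.2⟩
      linarith
    have hmono := intervalIntegral.integral_mono_on (μ := volume)
      (show (-1:ℝ) ≤ 1 by norm_num)
      (_root_.intervalIntegrable_const (c := |g (y.1, t)| - C))
      (Continuous.intervalIntegrable (by fun_prop : Continuous (fun s' : ℝ => |g (s', t)|)) _ _)
      key
    rw [intervalIntegral.integral_const] at hmono
    simp only [smul_eq_mul] at hmono
    have : (1 - (-1)) * (|g (y.1, t)| - C) = 2 * |g (y.1, t)| - 2 * C := by ring
    linarith [hmono]
  -- Step C
  have hgi := fubini_abs cg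
  have hhi := fubini_abs ch
  have hC : |f y| ≤ (1/2) * (∫ z in cell, |g z|) + ∫ z in cell, |p1 g z| := by
    have hmono2 : (∫ t in (-1:ℝ)..1, |g (y.1, t)|) ≤
        ∫ t in (-1:ℝ)..1, ((1/2) * (∫ s' in (-1:ℝ)..1, |g (s', t)|)
          + ∫ r in (-1:ℝ)..1, |p1 g (r, t)|) := by
      apply intervalIntegral.integral_mono_on (by norm_num : (-1:ℝ) ≤ 1)
      · exact ((cg.comp (Continuous.prodMk_right y.1)).abs).intervalIntegrable _ _
      · exact ((hgi.1.const_mul _).add hhi.1)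
      · exact fun t _ => hB t
    have heval : (∫ t in (-1:ℝ)..1, ((1/2) * (∫ s' in (-1:ℝ)..1, |g (s', t)|)
          + ∫ r in (-1:ℝ)..1, |p1 g (r, t)|))
        = (1/2) * (∫ z in cell, |g z|) + ∫ z in cell, |p1 g z| := by
      rw [intervalIntegral.integral_add (hgi.1.const_mul _) hhi.1,
        intervalIntegral.integral_const_mul, hgi.2, hhi.2]
    linarith [hA, hmono2, heval.le, heval.ge]
  -- Step D
  have hcs1 : (∫ z in cell, |g z|) ≤ 2 * Real.sqrt (L2sq g) := cs_cell cg
  have hcs2 : (∫ z in cell, |p1 g z|) ≤ 2 * Real.sqrt (L2sq (p1 g)) := cs_cell ch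
  have hm1 : Real.sqrt (L2sq g) ≤ Real.sqrt (L2sq g + L2sq (p1 g)) :=
    Real.sqrt_le_sqrt (by linarith [L2sq_nonneg (p1 g)])
  have hm2 : Real.sqrt (L2sq (p1 g)) ≤ Real.sqrt (L2sq g + L2sq (p1 g)) :=
    Real.sqrt_le_sqrt (by linarith [L2sq_nonneg g])
  calc |f y| ≤ (1/2) * (∫ z in cell, |g z|) + ∫ z in cell, |p1 g z| := hC
    _ ≤ (1/2) * (2 * Real.sqrt (L2sq g)) + 2 * Real.sqrt (L2sq (p1 g)) := by
        have hnn : (0:ℝ) ≤ ∫ z in cell, |g z| :=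
          MeasureTheory.integral_nonneg fun _ => abs_nonneg _
        linarith
    _ ≤ 3 * Real.sqrt (L2sq g + L2sq (p1 g)) := by linarith

end Master

section Zeros

variable {v : Pt → Pt}

lemma contDiff_comp1 (hv : ContDiff ℝ (⊤ : ℕ∞) v) : ContDiff ℝ (⊤ : ℕ∞) (comp1 v) := hv.fst

lemma contDiff_comp2 (hv : ContDiff ℝ (⊤ : ℕ∞) v) : ContDiff ℝ (⊤ : ℕ∞) (comp2 v) := hv.snd

lemma comp2_zero (ho : Odev v) (x : ℝ) : comp2 v (x, 0) = 0 := by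
  have h := (ho (x, 0)).2
  rw [neg_zero] at h
  have : comp2 v (x, 0) = -(comp2 v (x, 0)) := h
  linarith

lemma zero_p2_comp1 (hv : ContDiff ℝ (⊤ : ℕ∞) v) (ho : Odev v) :
    ∀ x : ℝ, ∃ s ∈ Set.Icc (-1:ℝ) 1, p2 (comp1 v) (x, s) = 0 := by
  intro x
  refine ⟨0, by norm_num, ?_⟩
  have h1 : HasDerivAt (fun t => comp1 v (x, t)) (p2 (comp1 v) (x, 0)) 0 :=
    hasDerivAt_snd (contDiff_comp1 hv) x 0
  have h2 : HasDerivAt (fun t : ℝ => comp1 v (x, -t)) (p2 (comp1 v) (x, 0) * (-1)) 0 := by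
    have hneg : HasDerivAt (fun t : ℝ => -t) (-1 : ℝ) 0 := hasDerivAt_neg' (0:ℝ)
    have h1' : HasDerivAt (fun t => comp1 v (x, t)) (p2 (comp1 v) (x, 0)) (-(0:ℝ)) := by
      rw [neg_zero]; exact h1
    have hcomp := h1'.comp (0:ℝ) hneg
    simpa [Function.comp_def] using hcomp
  have h3 : (fun t : ℝ => comp1 v (x, -t)) = (fun t : ℝ => comp1 v (x, t)) :=
    funext fun t => (ho (x, t)).1
  rw [h3] at h2
  have := h1.unique h2
  linarith

lemma zero_p1_comp2 (hv : ContDiff ℝ (⊤ : ℕ∞) v) (ho : Odev v) :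
    ∀ x : ℝ, ∃ s ∈ Set.Icc (-1:ℝ) 1, p1 (comp2 v) (x, s) = 0 := by
  intro x
  refine ⟨0, by norm_num, ?_⟩
  have h1 : HasDerivAt (fun s => comp2 v (s, 0)) (p1 (comp2 v) (x, 0)) x :=
    hasDerivAt_fst (contDiff_comp2 hv) x 0
  have h3 : (fun s : ℝ => comp2 v (s, 0)) = (fun _ : ℝ => (0:ℝ)) :=
    funext fun s => comp2_zero ho s
  rw [h3] at h1
  have h2 : HasDerivAt (fun _ : ℝ => (0:ℝ)) (0:ℝ) x := hasDerivAt_const x 0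
  exact h1.unique h2

lemma zero_p2_comp2 (hv : ContDiff ℝ (⊤ : ℕ∞) v) (ho : Odev v)
    (hp : Periodic2 (comp2 v)) :
    ∀ x : ℝ, ∃ s ∈ Set.Icc (-1:ℝ) 1, p2 (comp2 v) (x, s) = 0 := by
  intro x
  have h0 : comp2 v (x, 0) = 0 := comp2_zero ho x
  have h1 : comp2 v (x, 1) = 0 := by
    have hodd : comp2 v (x, -1) = -(comp2 v (x, 1)) := (ho (x, 1)).2
    have e1 : comp2 v (x, (-1:ℝ) + 2) = comp2 v (x, -1) := hp.2 (x, -1)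
    rw [show ((-1:ℝ) + 2) = 1 by norm_num] at e1
    linarith [e1, hodd]
  have hcont : ContinuousOn (fun t => comp2 v (x, t)) (Set.Icc 0 1) :=
    (((contDiff_comp2 hv).continuous).comp (Continuous.prodMk_right x)).continuousOn
  obtain ⟨c, hc, hderiv⟩ := exists_deriv_eq_zero (f := fun t => comp2 v (x, t))
    (show (0:ℝ) < 1 by norm_num) hcont (show comp2 v (x,0) = comp2 v (x,1) by rw [h0, h1])
  refine ⟨c, ⟨by linarith [hc.1], le_of_lt hc.2⟩, ?_⟩
  have := (hasDerivAt_snd (contDiff_comp2 hv) x c).deriv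
  rw [← this, hderiv]

end Zeros

section Assembly

lemma pd01 (f : Pt → ℝ) : pd 0 1 f = p2 f := rfl
lemma pd11 (f : Pt → ℝ) : pd 1 1 f = p1 (p2 f) := rfl
lemma pd10 (f : Pt → ℝ) : pd 1 0 f = p1 f := rfl
lemma pd20 (f : Pt → ℝ) : pd 2 0 f = p1 (p1 f) := rfl
lemma pd00 (f : Pt → ℝ) : pd 0 0 f = f := rfl

lemma comp1_d2V (v : Pt → Pt) : comp1 (d2V v) = p2 (comp1 v) := rfl
lemma comp2_d2V (v : Pt → Pt) : comp2 (d2V v) = p2 (comp2 v) := rfl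

lemma sobSq_two (f : Pt → ℝ) : sobSq 2 f =
    L2sq (pd 0 0 f) + L2sq (pd 0 1 f) + L2sq (pd 0 2 f)
      + (L2sq (pd 1 0 f) + L2sq (pd 1 1 f)) + L2sq (pd 2 0 f) := by
  simp [sobSq, Finset.sum_range_succ]

lemma sobSq_one (f : Pt → ℝ) : sobSq 1 f =
    L2sq (pd 0 0 f) + L2sq (pd 0 1 f) + L2sq (pd 1 0 f) := by
  simp [sobSq, Finset.sum_range_succ]

lemma sobSq_nonneg (i : ℕ) (f : Pt → ℝ) : 0 ≤ sobSq i f :=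
  Finset.sum_nonneg fun _ _ => Finset.sum_nonneg fun _ _ => L2sq_nonneg _

lemma sobV_nonneg (i : ℕ) (v : Pt → Pt) : 0 ≤ sobV i v := Real.sqrt_nonneg _

lemma sobV_sq (i : ℕ) (v : Pt → Pt) :
    sobV i v * sobV i v = sobSq i (comp1 v) + sobSq i (comp2 v) :=
  Real.mul_self_sqrt (add_nonneg (sobSq_nonneg _ _) (sobSq_nonneg _ _))

lemma master_le {f : Pt → ℝ} (hf : ContDiff ℝ (⊤ : ℕ∞) f)
    (hz : ∀ x : ℝ, ∃ s ∈ Set.Icc (-1:ℝ) 1, f (x, s) = 0)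
    {T : ℝ} (hT0 : 0 ≤ T)
    (hT : L2sq (p2 f) + L2sq (p1 (p2 f)) ≤ T * T) :
    ∀ y ∈ cell, |f y| ≤ 3 * T := by
  intro y hy
  have h1 := master hf hz y hy
  have h2 : Real.sqrt (L2sq (p2 f) + L2sq (p1 (p2 f))) ≤ T := by
    calc Real.sqrt (L2sq (p2 f) + L2sq (p1 (p2 f))) ≤ Real.sqrt (T * T) :=
          Real.sqrt_le_sqrt hT
      _ = T := Real.sqrt_mul_self hT0
  linarith

/-- The bound `|∂₂v₁ y| ≤ 3 ‖∂₂v‖₂` etc. -/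
lemma bd_p2_comp1 {v : Pt → Pt} (hv : ContDiff ℝ (⊤ : ℕ∞) v) (ho : Odev v) :
    ∀ y ∈ cell, |p2 (comp1 v) y| ≤ 3 * sobV 2 (d2V v) := by
  apply master_le (contDiff_p2 (contDiff_comp1 hv)) (zero_p2_comp1 hv ho)
    (sobV_nonneg 2 (d2V v))
  rw [sobV_sq, sobSq_two (comp1 (d2V v)), sobSq_two (comp2 (d2V v))]
  have e1 : p2 (p2 (comp1 v)) = pd 0 1 (comp1 (d2V v)) := rfl
  have e2 : p1 (p2 (p2 (comp1 v))) = pd 1 1 (comp1 (d2V v)) := rfl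
  rw [e2, e1]
  have := fun a b => L2sq_nonneg (pd a b (comp1 (d2V v)))
  have := fun a b => L2sq_nonneg (pd a b (comp2 (d2V v)))
  linarith [L2sq_nonneg (pd 0 0 (comp1 (d2V v))), L2sq_nonneg (pd 0 2 (comp1 (d2V v))),
    L2sq_nonneg (pd 1 0 (comp1 (d2V v))), L2sq_nonneg (pd 2 0 (comp1 (d2V v))),
    L2sq_nonneg (pd 0 0 (comp2 (d2V v))), L2sq_nonneg (pd 0 1 (comp2 (d2V v))),
    L2sq_nonneg (pd 0 2 (comp2 (d2V v))), L2sq_nonneg (pd 1 0 (comp2 (d2V v))),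
    L2sq_nonneg (pd 1 1 (comp2 (d2V v))), L2sq_nonneg (pd 2 0 (comp2 (d2V v)))]

lemma bd_p2_comp2 {v : Pt → Pt} (hv : ContDiff ℝ (⊤ : ℕ∞) v) (ho : Odev v)
    (hp : Periodic2 (comp2 v)) :
    ∀ y ∈ cell, |p2 (comp2 v) y| ≤ 3 * sobV 2 (d2V v) := by
  apply master_le (contDiff_p2 (contDiff_comp2 hv)) (zero_p2_comp2 hv ho hp)
    (sobV_nonneg 2 (d2V v))
  rw [sobV_sq, sobSq_two (comp1 (d2V v)), sobSq_two (comp2 (d2V v))]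
  have e1 : p2 (p2 (comp2 v)) = pd 0 1 (comp2 (d2V v)) := rfl
  have e2 : p1 (p2 (p2 (comp2 v))) = pd 1 1 (comp2 (d2V v)) := rfl
  rw [e2, e1]
  linarith [L2sq_nonneg (pd 0 0 (comp1 (d2V v))), L2sq_nonneg (pd 0 1 (comp1 (d2V v))),
    L2sq_nonneg (pd 0 2 (comp1 (d2V v))), L2sq_nonneg (pd 1 0 (comp1 (d2V v))),
    L2sq_nonneg (pd 1 1 (comp1 (d2V v))), L2sq_nonneg (pd 2 0 (comp1 (d2V v))),
    L2sq_nonneg (pd 0 0 (comp2 (d2V v))), L2sq_nonneg (pd 0 2 (comp2 (d2V v))),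
    L2sq_nonneg (pd 1 0 (comp2 (d2V v))), L2sq_nonneg (pd 2 0 (comp2 (d2V v)))]

lemma bd_p1_comp2 {v : Pt → Pt} (hv : ContDiff ℝ (⊤ : ℕ∞) v) (ho : Odev v) :
    ∀ y ∈ cell, |p1 (comp2 v) y| ≤ 3 * sobV 2 (d2V v) := by
  apply master_le (contDiff_p1 (contDiff_comp2 hv)) (zero_p1_comp2 hv ho)
    (sobV_nonneg 2 (d2V v))
  rw [sobV_sq, sobSq_two (comp1 (d2V v)), sobSq_two (comp2 (d2V v))]
  have hcomm : p1 (p2 (comp2 v)) = p2 (p1 (comp2 v)) := p1_p2_comm (contDiff_comp2 hv)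
  have e1 : L2sq (p2 (p1 (comp2 v))) = L2sq (pd 1 0 (comp2 (d2V v))) := by
    rw [← hcomm]; rfl
  have e2 : L2sq (p1 (p2 (p1 (comp2 v)))) = L2sq (pd 2 0 (comp2 (d2V v))) := by
    rw [← hcomm]; rfl
  rw [e2, e1]
  linarith [L2sq_nonneg (pd 0 0 (comp1 (d2V v))), L2sq_nonneg (pd 0 1 (comp1 (d2V v))),
    L2sq_nonneg (pd 0 2 (comp1 (d2V v))), L2sq_nonneg (pd 1 0 (comp1 (d2V v))),
    L2sq_nonneg (pd 1 1 (comp1 (d2V v))), L2sq_nonneg (pd 2 0 (comp1 (d2V v))),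
    L2sq_nonneg (pd 0 0 (comp2 (d2V v))), L2sq_nonneg (pd 0 1 (comp2 (d2V v))),
    L2sq_nonneg (pd 0 2 (comp2 (d2V v))), L2sq_nonneg (pd 1 1 (comp2 (d2V v)))]

lemma bd2_p2_comp1 {v : Pt → Pt} (hv : ContDiff ℝ (⊤ : ℕ∞) v) (ho : Odev v) :
    ∀ y ∈ cell, |p2 (comp1 v) y| ≤ 3 * sobV 1 (d2V (d2V v)) := by
  apply master_le (contDiff_p2 (contDiff_comp1 hv)) (zero_p2_comp1 hv ho)
    (sobV_nonneg 1 (d2V (d2V v)))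
  rw [sobV_sq, sobSq_one (comp1 (d2V (d2V v))), sobSq_one (comp2 (d2V (d2V v)))]
  have e1 : p2 (p2 (comp1 v)) = pd 0 0 (comp1 (d2V (d2V v))) := rfl
  have e2 : p1 (p2 (p2 (comp1 v))) = pd 1 0 (comp1 (d2V (d2V v))) := rfl
  rw [e2, e1]
  linarith [L2sq_nonneg (pd 0 1 (comp1 (d2V (d2V v)))),
    L2sq_nonneg (pd 0 0 (comp2 (d2V (d2V v)))), L2sq_nonneg (pd 0 1 (comp2 (d2V (d2V v)))),
    L2sq_nonneg (pd 1 0 (comp2 (d2V (d2V v))))]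

lemma bd2_p2_comp2 {v : Pt → Pt} (hv : ContDiff ℝ (⊤ : ℕ∞) v) (ho : Odev v)
    (hp : Periodic2 (comp2 v)) :
    ∀ y ∈ cell, |p2 (comp2 v) y| ≤ 3 * sobV 1 (d2V (d2V v)) := by
  apply master_le (contDiff_p2 (contDiff_comp2 hv)) (zero_p2_comp2 hv ho hp)
    (sobV_nonneg 1 (d2V (d2V v)))
  rw [sobV_sq, sobSq_one (comp1 (d2V (d2V v))), sobSq_one (comp2 (d2V (d2V v)))]
  have e1 : p2 (p2 (comp2 v)) = pd 0 0 (comp2 (d2V (d2V v))) := rfl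
  have e2 : p1 (p2 (p2 (comp2 v))) = pd 1 0 (comp2 (d2V (d2V v))) := rfl
  rw [e2, e1]
  linarith [L2sq_nonneg (pd 0 1 (comp2 (d2V (d2V v)))),
    L2sq_nonneg (pd 0 0 (comp1 (d2V (d2V v)))), L2sq_nonneg (pd 0 1 (comp1 (d2V (d2V v)))),
    L2sq_nonneg (pd 1 0 (comp1 (d2V (d2V v))))]

end Assembly


lemma prodbd {e X b c : ℝ} (he : |e| ≤ b) (hX : |X| ≤ c) : |e * X| ≤ b * c := by
  rw [abs_mul]
  exact mul_le_mul he hX (abs_nonneg X) (le_trans (abs_nonneg e) he)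

lemma arith_A {A B C D e11 e12 e21 e22 S : ℝ} (hS : 0 ≤ S)
    (hB : |B| ≤ 3 * S) (hC : |C| ≤ 3 * S) (hD : |D| ≤ 3 * S)
    (he21 : |e21| ≤ 1/4) (he22 : |e22| ≤ 1/4) (he12 : |e12| ≤ 1/4)
    (hdet' : (1 + e11) * (1 + e22) - e21 * e12 = 1)
    (hdiv' : (1 + e22) * A - e12 * B - e21 * C + (1 + e11) * D = 0) :
    |A| ≤ 8 * S := by
  obtain ⟨h21a, h21b⟩ := abs_le.mp he21
  obtain ⟨h22a, h22b⟩ := abs_le.mp he22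
  obtain ⟨h12a, h12b⟩ := abs_le.mp he12
  have hP := prodbd he21 he12
  obtain ⟨hPa, hPb⟩ := abs_le.mp hP
  have hK1 : 1 + e11 ≤ 17/12 := by
    by_contra hcon
    push_neg at hcon
    have hpos : 0 < (1 + e11 - 17/12) * (1 + e22) :=
      mul_pos (by linarith) (by linarith)
    have hexp : (1 + e11 - 17/12) * (1 + e22)
        = 1 + e21 * e12 - (17/12) * (1 + e22) := by linear_combination hdet'
    rw [hexp] at hpos
    norm_num at hPb
    linarith
  have hK2 : (3:ℝ)/4 ≤ 1 + e11 := by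
    by_contra hcon
    push_neg at hcon
    have hpos : 0 < (3/4 - (1 + e11)) * (1 + e22) :=
      mul_pos (by linarith) (by linarith)
    have hexp : (3/4 - (1 + e11)) * (1 + e22)
        = (3/4) * (1 + e22) - (1 + e21 * e12) := by linear_combination -hdet'
    rw [hexp] at hpos
    norm_num at hPa
    linarith
  have ht1 : |e12 * B| ≤ (1/4) * (3 * S) := prodbd he12 hB
  have ht2 : |e21 * C| ≤ (1/4) * (3 * S) := prodbd he21 hC
  have hKabs : |1 + e11| ≤ 17/12 := by
    rw [abs_of_nonneg (by linarith)]; exact hK1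
  have ht3 : |(1 + e11) * D| ≤ (17/12) * (3 * S) := prodbd hKabs hD
  have heq : (1 + e22) * A = e12 * B + e21 * C - (1 + e11) * D := by linarith
  have htri : |(1 + e22) * A| ≤ (23/4) * S := by
    rw [heq]
    calc |e12 * B + e21 * C - (1 + e11) * D|
        ≤ |e12 * B + e21 * C| + |(1 + e11) * D| := abs_sub _ _
      _ ≤ |e12 * B| + |e21 * C| + |(1 + e11) * D| := by
          linarith [abs_add_le (e12 * B) (e21 * C)]
      _ ≤ (23/4) * S := by linarith
  have h5 : (3/4) * |A| ≤ |(1 + e22) * A| := by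
    rw [abs_mul]
    have h6 : (3:ℝ)/4 ≤ |1 + e22| := by
      rw [abs_of_nonneg (by linarith)]; linarith
    exact mul_le_mul_of_nonneg_right h6 (abs_nonneg A)
  linarith

lemma sqrt_pair_le {A C S k : ℝ} (hS : 0 ≤ S) (hk : 0 ≤ k)
    (hA : |A| ≤ k * S) (hC : |C| ≤ k * S) :
    Real.sqrt (A ^ 2 + C ^ 2) ≤ 2 * k * S := by
  have h1 : A ^ 2 + C ^ 2 ≤ (2 * k * S) ^ 2 := by
    have := abs_nonneg A
    have := abs_nonneg C
    nlinarith [sq_abs A, sq_abs C, mul_nonneg hk hS]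
  calc Real.sqrt (A ^ 2 + C ^ 2) ≤ Real.sqrt ((2 * k * S) ^ 2) := Real.sqrt_le_sqrt h1
    _ = 2 * k * S := Real.sqrt_sq (by positivity)

/-- there are constants `δ ∈ (0,1]`, `c₀ > 0` such that for all
smooth 2-periodic maps `η, u`, both satisfying the odevity conditions, with
`det(I + ∇η) = 1`, `‖∂₂η‖₂ ≤ δ` and `div_𝒜 u = 0` (where `𝒜 = (∇(η + id))^{-T}`),
one has `‖∂₁u‖_{L^∞} ≤ c₀‖∂₂u‖₂` and `‖∂₂u‖_{L^∞} ≤ c₀‖∂₂²u‖₁` on the periodic cell. -/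
theorem statement14 :
    ∃ δ c₀ : ℝ, 0 < δ ∧ δ ≤ 1 ∧ 0 < c₀ ∧
      ∀ η u : Pt → Pt, ContDiff ℝ (⊤ : ℕ∞) η → ContDiff ℝ (⊤ : ℕ∞) u →
        Periodic2 (comp1 η) → Periodic2 (comp2 η) →
        Periodic2 (comp1 u) → Periodic2 (comp2 u) →
        Odev η → Odev u → DetCond η → DivACond η u →
        sobV 2 (d2V η) ≤ δ →
        ∀ y ∈ cell,
          Real.sqrt ((p1 (comp1 u) y) ^ 2 + (p1 (comp2 u) y) ^ 2)
              ≤ c₀ * sobV 2 (d2V u) ∧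
          Real.sqrt ((p2 (comp1 u) y) ^ 2 + (p2 (comp2 u) y) ^ 2)
              ≤ c₀ * sobV 1 (d2V (d2V u)) := by
  refine ⟨1/12, 20, by norm_num, by norm_num, by norm_num, ?_⟩
  intro η u hη hu hpη1 hpη2 hpu1 hpu2 hoη hou hdet hdiv hδ y hy
  have hS : 0 ≤ sobV 2 (d2V u) := sobV_nonneg _ _
  have hS2 : 0 ≤ sobV 1 (d2V (d2V u)) := sobV_nonneg _ _
  have hB := bd_p2_comp1 hu hou y hy
  have hD := bd_p2_comp2 hu hou hpu2 y hy
  have hC := bd_p1_comp2 hu hou y hy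
  have hB2 := bd2_p2_comp1 hu hou y hy
  have hD2 := bd2_p2_comp2 hu hou hpu2 y hy
  have he21 : |p2 (comp1 η) y| ≤ 1/4 := by
    have h := bd_p2_comp1 hη hoη y hy
    have h2 : sobV 2 (d2V η) ≤ 1/12 := hδ
    have h3 : (0:ℝ) ≤ sobV 2 (d2V η) := sobV_nonneg _ _
    linarith
  have he22 : |p2 (comp2 η) y| ≤ 1/4 := by
    have h := bd_p2_comp2 hη hoη hpη2 y hy
    have h2 : sobV 2 (d2V η) ≤ 1/12 := hδ
    linarith
  have he12 : |p1 (comp2 η) y| ≤ 1/4 := by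
    have h := bd_p1_comp2 hη hoη y hy
    have h2 : sobV 2 (d2V η) ≤ 1/12 := hδ
    linarith
  have hAbound := arith_A hS
    (by simpa using hB) (by simpa using hC) (by simpa using hD)
    he21 he22 he12 (hdet y) (hdiv y)
  constructor
  · have h1 := sqrt_pair_le hS (by norm_num : (0:ℝ) ≤ 8) hAbound
      (le_trans hC (by linarith))
    calc Real.sqrt ((p1 (comp1 u) y) ^ 2 + (p1 (comp2 u) y) ^ 2)
        ≤ 2 * 8 * sobV 2 (d2V u) := h1
      _ ≤ 20 * sobV 2 (d2V u) := by linarith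
  · have h1 := sqrt_pair_le hS2 (by norm_num : (0:ℝ) ≤ 3) hB2 hD2
    calc Real.sqrt ((p2 (comp1 u) y) ^ 2 + (p2 (comp2 u) y) ^ 2)
        ≤ 2 * 3 * sobV 1 (d2V (d2V u)) := h1
      _ ≤ 20 * sobV 1 (d2V (d2V u)) := by linarith
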